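/- (Tree / Penrose inequality.) Let S be a finite set with |S| ≥ 2 and let u assign to every unordered pair e of distinct elements of S a real number u_e ∈ [−1, 0]. Then |∑_{G ∈ 𝒞_S} ∏_{e ∈ E(G)} u_e| ≤ ∑_{T ∈ 𝒯_S} ∏_{e ∈ E(T)} |u_e|. In particular, if u_e = −1_{e ∈ A} for some set A of pairs, the absolute value of the connected-graph cumulant is bounded by the number of trees on S all of whose edges lie in A. -/

import Mathlib

open scoped Classical

variable {V : Type*} [Fintype V] [DecidableEq V]

/-- Graphs on a finite vertex set `B`, encoded as finsets of non-diagonal edges with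
both endpoints in `B`. -/
noncomputable def graphsOn (B : Finset V) : Finset (Finset (Sym2 V)) :=
  B.sym2.powerset.filter fun G => ∀ e ∈ G, ¬ e.IsDiag

/-- The edge set `G` connects all the vertices of `B`. -/
def ConnOn (B : Finset V) (G : Finset (Sym2 V)) : Prop :=
  ∀ x ∈ B, ∀ y ∈ B, (SimpleGraph.fromEdgeSet (G : Set (Sym2 V))).Reachable x y

/-- Connected graphs on `B`. -/
noncomputable def connGraphsOn (B : Finset V) : Finset (Finset (Sym2 V)) :=
  (graphsOn B).filter fun G => ConnOn B G

/-- Trees (minimally connected graphs) on `B`: connected graphs with `|B| - 1` edges. -/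
noncomputable def treesOn (B : Finset V) : Finset (Finset (Sym2 V)) :=
  (connGraphsOn B).filter fun G => G.card = B.card - 1

set_option linter.unusedSectionVars false

namespace TreeIneq

open SimpleGraph Finset

noncomputable local instance : LinearOrder (Sym2 V) :=
  LinearOrder.lift' (Fintype.equivFin (Sym2 V)) (Equiv.injective _)

noncomputable local instance : PartialOrder (Sym2 V) :=
  @LinearOrder.toPartialOrder (Sym2 V) inferInstance

/-- The simple graph on `V` with edge set `F`. -/
noncomputable def EG (F : Finset (Sym2 V)) : SimpleGraph V :=
  SimpleGraph.fromEdgeSet (F : Set (Sym2 V))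

/-- Reachability in `EG F`. -/
def conn (F : Finset (Sym2 V)) (x y : V) : Prop := (EG F).Reachable x y

lemma EG_adj {F : Finset (Sym2 V)} {a b : V} :
    (EG F).Adj a b ↔ s(a, b) ∈ F ∧ a ≠ b := by
  simp [EG, SimpleGraph.fromEdgeSet_adj]

lemma conn_of_mem {F : Finset (Sym2 V)} {a b : V} (h : s(a, b) ∈ F) (hab : a ≠ b) :
    conn F a b :=
  (EG_adj.mpr ⟨h, hab⟩).reachable

lemma conn_mono {F F' : Finset (Sym2 V)} (h : F ⊆ F') {x y : V} (hc : conn F x y) :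
    conn F' x y :=
  hc.mono (SimpleGraph.fromEdgeSet_mono (by exact_mod_cast h))

lemma conn_lift {F F' : Finset (Sym2 V)} (h : ∀ a b : V, s(a, b) ∈ F → a ≠ b → conn F' a b)
    {x y : V} (hxy : conn F x y) : conn F' x y := by
  obtain ⟨w⟩ := hxy
  induction w with
  | nil => exact Reachable.refl _
  | cons ha _ ih =>
    have h1 := EG_adj.mp ha
    exact (h _ _ h1.1 h1.2).trans ih

/-- Edges of `F` smaller than `e`. -/
noncomputable def below (F : Finset (Sym2 V)) (e : Sym2 V) : Finset (Sym2 V) :=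
  F.filter fun f => f < e

lemma below_subset {F : Finset (Sym2 V)} {e : Sym2 V} : below F e ⊆ F := filter_subset _ _

lemma below_mono {F F' : Finset (Sym2 V)} (h : F ⊆ F') (e : Sym2 V) :
    below F e ⊆ below F' e := filter_subset_filter _ h

lemma below_mono_right {F : Finset (Sym2 V)} {e e' : Sym2 V} (h : e ≤ e') :
    below F e ⊆ below F e' := by
  intro f hf
  rw [below, mem_filter] at hf ⊢
  exact ⟨hf.1, lt_of_lt_of_le hf.2 h⟩

/-- The Kruskal greedy subgraph: keep an edge iff its endpoints are not connected by
strictly smaller edges. -/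
noncomputable def pii (G : Finset (Sym2 V)) : Finset (Sym2 V) :=
  G.filter fun e => ∀ x y : V, e = s(x, y) → ¬ conn (below G e) x y

lemma pii_subset {G : Finset (Sym2 V)} : pii G ⊆ G := filter_subset _ _

/-- No edge's endpoints are connected by strictly smaller edges. -/
def Stable (F : Finset (Sym2 V)) : Prop :=
  ∀ x y : V, s(x, y) ∈ F → ¬ conn (below F s(x, y)) x y

lemma pii_stable {G : Finset (Sym2 V)} : Stable (pii G) := by
  intro x y hm hc
  rw [pii, mem_filter] at hm
  exact hm.2 x y rfl (conn_mono (below_mono pii_subset _) hc)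

/-- Key lemma: the endpoints of any edge of `G` are connected by greedy edges `≤ e`. -/
lemma key {G : Finset (Sym2 V)} (hG : ∀ f ∈ G, ¬ f.IsDiag) :
    ∀ e : Sym2 V, e ∈ G → ∀ x y : V, e = s(x, y) →
      conn ((pii G).filter fun f => f ≤ e) x y := by
  have wf : WellFounded ((· < ·) : Sym2 V → Sym2 V → Prop) :=
    Finite.wellFounded_of_trans_of_irrefl _
  intro e
  induction e using wf.induction with
  | _ e ih =>
    intro he x y hxy
    subst hxy
    by_cases hp : s(x, y) ∈ pii G
    · have hnd : x ≠ y := by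
        have := hG _ he
        rwa [Sym2.mk_isDiag_iff] at this
      exact conn_of_mem (mem_filter.mpr ⟨hp, le_rfl⟩) hnd
    · rw [pii, mem_filter, not_and] at hp
      have hp2 := hp he
      push_neg at hp2
      obtain ⟨a, b, hab, hcab⟩ := hp2
      have hcxy : conn (below G s(x, y)) x y := by
        rcases Sym2.eq_iff.mp hab.symm with ⟨rfl, rfl⟩ | ⟨rfl, rfl⟩
        · exact hcab
        · exact hcab.symm
      refine conn_lift (fun a b hf hne => ?_) hcxy
      rw [below, mem_filter] at hf
      exact conn_mono
        (by
          intro g hg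
          rw [mem_filter] at hg ⊢
          exact ⟨hg.1, le_trans hg.2 hf.2.le⟩)
        (ih _ hf.2 hf.1 a b rfl)

/-- `F` connects all pairs of vertices. -/
def Sp (F : Finset (Sym2 V)) : Prop := ∀ x y : V, conn F x y

lemma pii_sp {G : Finset (Sym2 V)} (hG : ∀ f ∈ G, ¬ f.IsDiag) (h : Sp G) : Sp (pii G) := by
  intro x y
  refine conn_lift (fun a b hf hne => ?_) (h x y)
  exact conn_mono (filter_subset _ _) (key hG _ hf a b rfl)

/-- Number of connected components. -/
noncomputable def cc (F : Finset (Sym2 V)) : ℕ :=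
  Fintype.card (EG F).ConnectedComponent

lemma cc_empty : cc (∅ : Finset (Sym2 V)) = Fintype.card V := by
  have hbot : EG (∅ : Finset (Sym2 V)) = ⊥ := by simp [EG]
  refine (Fintype.card_of_bijective
    (f := (EG (∅ : Finset (Sym2 V))).connectedComponentMk) ⟨?_, ?_⟩).symm
  · intro a b h
    have := ConnectedComponent.exact h
    rw [hbot, reachable_bot] at this
    exact this
  · exact fun c => c.ind fun v => ⟨v, rfl⟩

/-- Removing one edge: walks decompose. -/
lemma reach_erase {F : Finset (Sym2 V)} {a b x y : V} (h : conn F x y) :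
    conn (F.erase s(a, b)) x y
      ∨ (conn (F.erase s(a, b)) x a ∧ conn (F.erase s(a, b)) b y)
      ∨ (conn (F.erase s(a, b)) x b ∧ conn (F.erase s(a, b)) a y) := by
  obtain ⟨w⟩ := h
  induction w with
  | nil => exact Or.inl (Reachable.refl _)
  | @cons x z y ha p ih =>
    obtain ⟨hz, hne⟩ := EG_adj.mp ha
    by_cases hxz : s(x, z) = s(a, b)
    · rcases Sym2.eq_iff.mp hxz with ⟨rfl, rfl⟩ | ⟨rfl, rfl⟩
      · rcases ih with h1 | ⟨h1, h2⟩ | ⟨h1, h2⟩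
        · exact Or.inr (Or.inl ⟨Reachable.refl _, h1⟩)
        · exact Or.inr (Or.inl ⟨Reachable.refl _, h2⟩)
        · exact Or.inl h2
      · rcases ih with h1 | ⟨h1, h2⟩ | ⟨h1, h2⟩
        · exact Or.inr (Or.inr ⟨Reachable.refl _, h1⟩)
        · exact Or.inl h2
        · exact Or.inr (Or.inr ⟨Reachable.refl _, h2⟩)
    · have step : conn (F.erase s(a, b)) x z :=
        conn_of_mem (mem_erase.mpr ⟨hxz, hz⟩) hne
      rcases ih with h1 | ⟨h1, h2⟩ | ⟨h1, h2⟩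
      · exact Or.inl (step.trans h1)
      · exact Or.inr (Or.inl ⟨step.trans h1, h2⟩)
      · exact Or.inr (Or.inr ⟨step.trans h1, h2⟩)

/-- The map on components induced by `F.erase e ⊆ F`. -/
noncomputable def ccmap (F : Finset (Sym2 V)) (e : Sym2 V) :
    (EG (F.erase e)).ConnectedComponent → (EG F).ConnectedComponent :=
  ConnectedComponent.map
    (SimpleGraph.Hom.ofLE
      (SimpleGraph.fromEdgeSet_mono (by exact_mod_cast erase_subset e F)))

lemma ccmap_mk {F : Finset (Sym2 V)} {e : Sym2 V} {v : V} :
    ccmap F e ((EG (F.erase e)).connectedComponentMk v)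
      = (EG F).connectedComponentMk v := rfl

lemma cc_le {F : Finset (Sym2 V)} (a b : V) :
    cc (F.erase s(a, b)) ≤ cc F + 1 := by
  classical
  have hinj : Function.Injective (fun c : (EG (F.erase s(a, b))).ConnectedComponent =>
      if c = (EG (F.erase s(a, b))).connectedComponentMk b
      then (none : Option (EG F).ConnectedComponent)
      else some (ccmap F s(a, b) c)) := by
    intro c₁ c₂ hg
    refine ConnectedComponent.ind₂ (β := fun c₁ c₂ =>
      (if c₁ = (EG (F.erase s(a, b))).connectedComponentMk b
        then (none : Option (EG F).ConnectedComponent)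
        else some (ccmap F s(a, b) c₁)) =
      (if c₂ = (EG (F.erase s(a, b))).connectedComponentMk b
        then (none : Option (EG F).ConnectedComponent)
        else some (ccmap F s(a, b) c₂)) → c₁ = c₂) (fun x y hg => ?_) c₁ c₂ hg
    by_cases h1 : (EG (F.erase s(a, b))).connectedComponentMk x
        = (EG (F.erase s(a, b))).connectedComponentMk b
      <;> by_cases h2 : (EG (F.erase s(a, b))).connectedComponentMk y
        = (EG (F.erase s(a, b))).connectedComponentMk b
    · rw [h1, h2]
    · rw [if_pos h1, if_neg h2] at hg
      exact absurd hg (by simp)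
    · rw [if_neg h1, if_pos h2] at hg
      exact absurd hg (by simp)
    · rw [if_neg h1, if_neg h2] at hg
      have hg' := Option.some_injective _ hg
      rw [ccmap_mk, ccmap_mk] at hg'
      have hr : conn F x y := ConnectedComponent.exact hg'
      rcases reach_erase (a := a) (b := b) hr with hc | ⟨hc1, hc2⟩ | ⟨hc1, hc2⟩
      · exact ConnectedComponent.sound hc
      · exact absurd (ConnectedComponent.sound hc2.symm) h2
      · exact absurd (ConnectedComponent.sound hc1) h1
  calc cc (F.erase s(a, b)) ≤ Fintype.card (Option (EG F).ConnectedComponent) :=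
        Fintype.card_le_of_injective _ hinj
    _ = cc F + 1 := Fintype.card_option

lemma cc_ge {F : Finset (Sym2 V)} {a b : V} (hab : s(a, b) ∈ F) (hd : a ≠ b)
    (h : ¬ conn (F.erase s(a, b)) a b) :
    cc F < cc (F.erase s(a, b)) := by
  refine Fintype.card_lt_of_surjective_not_injective (ccmap F s(a, b)) ?_ ?_
  · exact fun c => c.ind fun v => ⟨(EG (F.erase s(a, b))).connectedComponentMk v, rfl⟩
  · intro hinj
    apply h
    refine ConnectedComponent.exact (hinj ?_)
    rw [ccmap_mk, ccmap_mk]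
    exact ConnectedComponent.sound (conn_of_mem hab hd)

lemma cc_one {F : Finset (Sym2 V)} (hne : Nonempty V) (h : Sp F) :
    cc F = 1 := by
  obtain ⟨v⟩ := hne
  refine Fintype.card_eq_one_iff.mpr ⟨(EG F).connectedComponentMk v, fun c => ?_⟩
  exact c.ind fun w => ConnectedComponent.sound (h w v)

lemma card_lower (F : Finset (Sym2 V)) (hF : ∀ f ∈ F, ¬ f.IsDiag) :
    Fintype.card V ≤ cc F + F.card := by
  induction F using Finset.strongInduction with
  | _ F ih =>
    rcases F.eq_empty_or_nonempty with rfl | ⟨e, he⟩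
    · simp [cc_empty]
    · obtain ⟨a, b, rfl⟩ : ∃ a b : V, e = s(a, b) := Sym2.ind (fun x y => ⟨x, y, rfl⟩) e
      have h1 := ih (F.erase s(a, b)) (erase_ssubset he)
        (fun f hf => hF f (erase_subset _ _ hf))
      have h2 := cc_le (F := F) a b
      have h3 : 1 ≤ F.card := card_pos.mpr ⟨_, he⟩
      rw [card_erase_of_mem he] at h1
      omega

lemma stable_card (F : Finset (Sym2 V)) (hF : ∀ f ∈ F, ¬ f.IsDiag) (hS : Stable F) :
    cc F + F.card = Fintype.card V := by
  induction F using Finset.strongInduction with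
  | _ F ih =>
    rcases F.eq_empty_or_nonempty with rfl | hne
    · simp [cc_empty]
    · have hmax := F.max'_mem hne
      obtain ⟨a, b, hab⟩ : ∃ a b : V, F.max' hne = s(a, b) :=
        Sym2.ind (fun x y => ⟨x, y, rfl⟩) (F.max' hne)
      rw [hab] at hmax
      have hd : a ≠ b := by
        have := hF _ hmax
        rwa [Sym2.mk_isDiag_iff] at this
      have hsub : F.erase s(a, b) ⊆ below F s(a, b) := by
        intro f hf
        rw [mem_erase] at hf
        rw [below, mem_filter]
        refine ⟨hf.2, lt_of_le_of_ne ?_ hf.1⟩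
        rw [← hab]
        exact F.le_max' f hf.2
      have hnc : ¬ conn (F.erase s(a, b)) a b :=
        fun h => hS a b hmax (conn_mono hsub h)
      have hstab' : Stable (F.erase s(a, b)) := by
        intro x y hm hc
        have hmF : s(x, y) ∈ F := erase_subset _ _ hm
        refine hS x y hmF (conn_mono ?_ hc)
        intro f hf
        rw [below, mem_filter] at hf ⊢
        exact ⟨erase_subset _ _ hf.1, hf.2⟩
      have h1 := ih (F.erase s(a, b)) (erase_ssubset hmax)
        (fun f hf => hF f (erase_subset _ _ hf)) hstab'
      have h2 := cc_le (F := F) a b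
      have h3 := cc_ge hmax hd hnc
      have h4 : 1 ≤ F.card := card_pos.mpr ⟨_, hmax⟩
      rw [card_erase_of_mem hmax] at h1
      omega

/-- A spanning tree is stable. -/
lemma tree_stable (hV : 2 ≤ Fintype.card V) {T : Finset (Sym2 V)}
    (hTd : ∀ f ∈ T, ¬ f.IsDiag) (hc : Sp T) (hcard : T.card = Fintype.card V - 1) :
    Stable T := by
  intro x y hm hconn
  have hbs : below T s(x, y) ⊆ T.erase s(x, y) := by
    intro f hf
    rw [below, mem_filter] at hf
    exact mem_erase.mpr ⟨ne_of_lt hf.2, hf.1⟩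
  have hsp' : Sp (T.erase s(x, y)) := by
    intro p q
    refine conn_lift (fun a b hf hne => ?_) (hc p q)
    by_cases hfe : s(a, b) = s(x, y)
    · have hxy' : conn (T.erase s(x, y)) x y := conn_mono hbs hconn
      rcases Sym2.eq_iff.mp hfe with ⟨rfl, rfl⟩ | ⟨rfl, rfl⟩
      · exact hxy'
      · exact hxy'.symm
    · exact conn_of_mem (mem_erase.mpr ⟨hfe, hf⟩) hne
  have h1 := card_lower (T.erase s(x, y)) (fun f hf => hTd f (erase_subset _ _ hf))
  have h2 : cc (T.erase s(x, y)) = 1 := cc_one (Fintype.card_pos_iff.mp (by omega)) hsp'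
  have h4 : 1 ≤ T.card := card_pos.mpr ⟨_, hm⟩
  rw [card_erase_of_mem hm, h2] at h1
  omega

lemma mem_connGraphsOn {G : Finset (Sym2 V)} :
    G ∈ connGraphsOn (Finset.univ : Finset V) ↔
      (∀ e ∈ G, ¬ e.IsDiag) ∧ Sp G := by
  rw [connGraphsOn, mem_filter, graphsOn, mem_filter, mem_powerset]
  constructor
  · rintro ⟨⟨-, h2⟩, h3⟩
    exact ⟨h2, fun x y => h3 x (mem_univ x) y (mem_univ y)⟩
  · rintro ⟨h2, h3⟩
    exact ⟨⟨by simp, h2⟩, fun x _ y _ => h3 x y⟩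

lemma pii_mem_trees (hV : 2 ≤ Fintype.card V) {G : Finset (Sym2 V)}
    (hG : G ∈ connGraphsOn (Finset.univ : Finset V)) :
    pii G ∈ treesOn (Finset.univ : Finset V) := by
  obtain ⟨hGd, hGsp⟩ := mem_connGraphsOn.mp hG
  have hd : ∀ f ∈ pii G, ¬ f.IsDiag := fun f hf => hGd f (pii_subset hf)
  have hsp : Sp (pii G) := pii_sp hGd hGsp
  have hcc : cc (pii G) = 1 := cc_one (Fintype.card_pos_iff.mp (by omega)) hsp
  have hcard := stable_card (pii G) hd pii_stable
  rw [treesOn, mem_filter]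
  refine ⟨mem_connGraphsOn.mpr ⟨hd, hsp⟩, ?_⟩
  rw [card_univ]
  omega

/-- Edges allowed to be added to the tree `T` without changing the greedy tree. -/
noncomputable def extra (T : Finset (Sym2 V)) : Finset (Sym2 V) :=
  Finset.univ.filter fun e =>
    ¬ e.IsDiag ∧ e ∉ T ∧ ∀ x y : V, e = s(x, y) → conn (below T e) x y

/-- Characterization of the fibers of the greedy map `pii`. -/
lemma fiber (hV : 2 ≤ Fintype.card V) {T G : Finset (Sym2 V)}
    (hT : T ∈ treesOn (Finset.univ : Finset V)) :
    (G ∈ connGraphsOn (Finset.univ : Finset V) ∧ pii G = T) ↔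
      (T ⊆ G ∧ G \ T ⊆ extra T) := by
  rw [treesOn, mem_filter] at hT
  obtain ⟨hTd, hTsp⟩ := mem_connGraphsOn.mp hT.1
  have hTcard : T.card = Fintype.card V - 1 := by
    have := hT.2
    rwa [card_univ] at this
  have hTstable : Stable T := tree_stable hV hTd hTsp hTcard
  constructor
  · rintro ⟨hGc, hpi⟩
    obtain ⟨hGd, hGsp⟩ := mem_connGraphsOn.mp hGc
    refine ⟨hpi ▸ pii_subset, ?_⟩
    intro e he
    rw [mem_sdiff] at he
    obtain ⟨heG, heT⟩ := he
    rw [extra, mem_filter]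
    refine ⟨mem_univ _, hGd e heG, heT, fun x y hexy => ?_⟩
    have hk := key hGd e heG x y hexy
    rw [hpi] at hk
    have hfe : T.filter (fun f => f ≤ e) = below T e := by
      ext f
      rw [mem_filter, below, mem_filter]
      constructor
      · rintro ⟨hf1, hf2⟩
        exact ⟨hf1, lt_of_le_of_ne hf2 (fun h => heT (h ▸ hf1))⟩
      · rintro ⟨hf1, hf2⟩
        exact ⟨hf1, hf2.le⟩
    rwa [hfe] at hk
  · rintro ⟨hTG, hGT⟩
    have hGd : ∀ f ∈ G, ¬ f.IsDiag := by
      intro f hf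
      by_cases hfT : f ∈ T
      · exact hTd f hfT
      · exact (mem_filter.mp (hGT (mem_sdiff.mpr ⟨hf, hfT⟩))).2.1
    have hGsp : Sp G := fun x y => conn_mono hTG (hTsp x y)
    have transfer : ∀ e : Sym2 V, ∀ x y : V, conn (below G e) x y → conn (below T e) x y := by
      intro e x y hc
      refine conn_lift (fun a b hf hne => ?_) hc
      rw [below, mem_filter] at hf
      by_cases hfT : s(a, b) ∈ T
      · exact conn_of_mem (by rw [below, mem_filter]; exact ⟨hfT, hf.2⟩) hne
      · have hx := (mem_filter.mp (hGT (mem_sdiff.mpr ⟨hf.1, hfT⟩))).2.2.2 a b rfl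
        exact conn_mono (below_mono_right hf.2.le) hx
    refine ⟨mem_connGraphsOn.mpr ⟨hGd, hGsp⟩, ?_⟩
    apply Finset.Subset.antisymm
    · intro e he
      rw [pii, mem_filter] at he
      by_contra heT
      obtain ⟨x, y, rfl⟩ : ∃ a b : V, e = s(a, b) := Sym2.ind (fun x y => ⟨x, y, rfl⟩) e
      have hex := (mem_filter.mp (hGT (mem_sdiff.mpr ⟨he.1, heT⟩))).2.2.2 x y rfl
      exact he.2 x y rfl (conn_mono (below_mono hTG _) hex)
    · intro e heT
      rw [pii, mem_filter]
      refine ⟨hTG heT, fun x y hexy hc => ?_⟩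
      subst hexy
      exact hTstable x y heT (transfer _ x y hc)

lemma main (hV : 2 ≤ Fintype.card V) (u : Sym2 V → ℝ)
    (hu : ∀ e : Sym2 V, ¬ e.IsDiag → u e ∈ Set.Icc (-1 : ℝ) 0) :
    |∑ G ∈ connGraphsOn (Finset.univ : Finset V), ∏ e ∈ G, u e|
      ≤ ∑ T ∈ treesOn (Finset.univ : Finset V), ∏ e ∈ T, |u e| := by
  classical
  rw [← Finset.sum_fiberwise_of_maps_to (g := pii)
    (fun G hG => pii_mem_trees hV hG) (fun G => ∏ e ∈ G, u e)]
  refine le_trans (Finset.abs_sum_le_sum_abs _ _) (Finset.sum_le_sum ?_)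
  intro T hT
  have hdisj : Disjoint T (extra T) := by
    rw [Finset.disjoint_left]
    intro e heT hee
    exact (mem_filter.mp hee).2.2.1 heT
  have hsum : ∑ G ∈ (connGraphsOn (Finset.univ : Finset V)).filter (fun G => pii G = T),
      ∏ e ∈ G, u e = (∏ e ∈ T, u e) * ∏ e ∈ extra T, (u e + 1) := by
    rw [Finset.prod_add, Finset.mul_sum]
    refine Finset.sum_nbij' (i := fun G => G \ T) (j := fun s => T ∪ s) ?_ ?_ ?_ ?_ ?_
    · intro G hG
      rw [mem_filter] at hG
      exact mem_powerset.mpr ((fiber hV hT).mp hG).2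
    · intro s hs
      rw [mem_powerset] at hs
      refine mem_filter.mpr ((fiber hV hT).mpr ⟨subset_union_left, ?_⟩)
      rw [union_sdiff_left]
      exact (sdiff_subset).trans hs
    · intro G hG
      rw [mem_filter] at hG
      show T ∪ (G \ T) = G
      exact union_sdiff_of_subset ((fiber hV hT).mp hG).1
    · intro s hs
      rw [mem_powerset] at hs
      show (T ∪ s) \ T = s
      rw [union_sdiff_left]
      exact sdiff_eq_self_of_disjoint (hdisj.symm.mono_left hs)
    · intro G hG
      rw [mem_filter] at hG
      have hTG : T ⊆ G := ((fiber hV hT).mp hG).1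
      rw [Finset.prod_const_one, mul_one, ← Finset.prod_union (disjoint_sdiff),
        union_sdiff_of_subset hTG]
  rw [hsum, abs_mul, Finset.abs_prod]
  have h01 : ∀ e ∈ extra T, (0 : ℝ) ≤ u e + 1 ∧ u e + 1 ≤ 1 := by
    intro e hee
    have := hu e (mem_filter.mp hee).2.1
    obtain ⟨h1, h2⟩ := this
    constructor <;> linarith
  have habs : |∏ e ∈ extra T, (u e + 1)| ≤ 1 := by
    rw [abs_of_nonneg (Finset.prod_nonneg fun e he => (h01 e he).1)]
    exact Finset.prod_le_one (fun e he => (h01 e he).1) (fun e he => (h01 e he).2)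
  exact mul_le_of_le_one_right (Finset.prod_nonneg fun e _ => abs_nonneg _) habs

end TreeIneq

/-- Tree (Penrose) inequality: for `u_e ∈ [-1, 0]` on non-diagonal pairs,
`|∑_{G ∈ 𝒞_S} ∏_{e ∈ E(G)} u_e| ≤ ∑_{T ∈ 𝒯_S} ∏_{e ∈ E(T)} |u_e|`. -/
theorem tree_inequality (hV : 2 ≤ Fintype.card V) (u : Sym2 V → ℝ)
    (hu : ∀ e : Sym2 V, ¬ e.IsDiag → u e ∈ Set.Icc (-1 : ℝ) 0) :
    |∑ G ∈ connGraphsOn (Finset.univ : Finset V), ∏ e ∈ G, u e|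
      ≤ ∑ T ∈ treesOn (Finset.univ : Finset V), ∏ e ∈ T, |u e| :=
  TreeIneq.main hV u hu
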